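/- Let T be a thick tree with loops with sink s. The map φ : G → ∏_{j ∈ V₀} ℤ/e_{j,p(j)}ℤ defined by φ(u)_j = ∑_{i ⪰ j} u_i (mod e_{j,p(j)}) is a group isomorphism from the sandpile group G onto the direct product ∏_{j ∈ V₀} ℤ/e_{j,p(j)}ℤ. -/

import Mathlib

namespace SandpilePaper

variable {V : Type*} [Fintype V] [DecidableEq V]

/-- Configurations: assignments of numbers of grains to ordinary (non-sink) vertices. -/
abbrev Conf (s : V) : Type _ := {i : V // i ≠ s} → ℕ

/-- The degree of a vertex: `deg i = ∑ j, e i j`. -/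
def deg (e : V → V → ℕ) (i : V) : ℕ := ∑ j, e i j

/-- Toppling the (unstable) vertex `i`. -/
def toppleAt (e : V → V → ℕ) (s : V) (i : {i : V // i ≠ s}) (u : Conf s) : Conf s :=
  fun j => if j = i then u i - deg e i.1 + e i.1 i.1 else u j + e i.1 j.1

/-- One toppling step: some unstable vertex topples. -/
def Topple (e : V → V → ℕ) (s : V) (u v : Conf s) : Prop :=
  ∃ i : {i : V // i ≠ s}, deg e i.1 ≤ u i ∧ v = toppleAt e s i u

/-- A configuration is stable if every ordinary vertex has fewer grains than its degree. -/
def Stable (e : V → V → ℕ) (s : V) (u : Conf s) : Prop :=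
  ∀ j : {i : V // i ≠ s}, u j < deg e j.1

/-- The underlying simple graph: edges between distinct vertices with positive multiplicity. -/
def graph (e : V → V → ℕ) : SimpleGraph V := SimpleGraph.fromRel fun i j => 0 < e i j

/-- `σ` is a stabilization map: `σ u` is stable and reached from `u` by finitely many topplings. -/
def IsStabilization (e : V → V → ℕ) (s : V) (σ : Conf s → Conf s) : Prop :=
  ∀ u, Stable e s (σ u) ∧ Relation.ReflTransGen (Topple e s) u (σ u)

/-- A stable configuration `u` is recurrent if every configuration can reach it. -/
def Recurrent (e : V → V → ℕ) (s : V) (σ : Conf s → Conf s) (u : Conf s) : Prop :=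
  Stable e s u ∧ ∀ v : Conf s, ∃ w : Conf s, σ (v + w) = u

/-- Apply a sequence of topplings. -/
def applySeq (e : V → V → ℕ) (s : V) (u : Conf s) : List {i : V // i ≠ s} → Conf s
  | [] => u
  | i :: L => applySeq e s (toppleAt e s i u) L

/-- A toppling sequence is valid if each toppled vertex is unstable when toppled. -/
def ValidSeq (e : V → V → ℕ) (s : V) (u : Conf s) : List {i : V // i ≠ s} → Prop
  | [] => True
  | i :: L => deg e i.1 ≤ u i ∧ ValidSeq e s (toppleAt e s i u) L

/-- `succeq e s i j` means `i ⪰ j`: `j` lies on the unique path from `i` to the sink `s`. -/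
def succeq (e : V → V → ℕ) (s i j : V) : Prop :=
  (graph e).dist i s = (graph e).dist i j + (graph e).dist j s

noncomputable instance (e : V → V → ℕ) (s i j : V) : Decidable (succeq e s i j) := Nat.decEq _ _

/-- `p` assigns to each ordinary vertex its parent: its neighbor on the path to the sink. -/
def IsParent (e : V → V → ℕ) (s : V) (p : {i : V // i ≠ s} → V) : Prop :=
  ∀ j : {i : V // i ≠ s}, (graph e).Adj j.1 (p j) ∧
    (graph e).dist (p j) s + 1 = (graph e).dist j.1 s

/-- The set `{i : i ⪰ j}`. -/
noncomputable def descendants (e : V → V → ℕ) (s : V) (j : {i : V // i ≠ s}) :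
    Finset {i : V // i ≠ s} :=
  Finset.univ.filter fun i => succeq e s i.1 j.1

/-- The set `{i : i ≻ j}`. -/
noncomputable def strictDescendants (e : V → V → ℕ) (s : V) (j : {i : V // i ≠ s}) :
    Finset {i : V // i ≠ s} :=
  Finset.univ.filter fun i => i ≠ j ∧ succeq e s i.1 j.1

/-- `j` is a leaf: its parent is its only neighbor in the underlying tree. -/
def IsLeaf (e : V → V → ℕ) (s : V) (p : {i : V // i ≠ s} → V) (j : {i : V // i ≠ s}) : Prop :=
  ∀ k : V, (graph e).Adj j.1 k → k = p j

/-- Rows of the toppling matrix `Δ`. -/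
def deltaRow (e : V → V → ℕ) (s : V) (i j : {i : V // i ≠ s}) : ℤ :=
  if i = j then (deg e i.1 : ℤ) - (e i.1 i.1 : ℤ) else -(e i.1 j.1 : ℤ)

/-- The lattice `Λ` spanned by the rows of the toppling matrix. -/
def lattice (e : V → V → ℕ) (s : V) : AddSubgroup ({i : V // i ≠ s} → ℤ) :=
  AddSubgroup.closure (Set.range (deltaRow e s))

/-- The map `φ(u)_j = ∑_{i ⪰ j} u_i (mod e_{j,p(j)})`. -/
noncomputable def phi (e : V → V → ℕ) (s : V) (p : {i : V // i ≠ s} → V) (u : Conf s)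
    (j : {i : V // i ≠ s}) : ZMod (e j.1 (p j)) :=
  ∑ i ∈ descendants e s j, (u i : ZMod (e j.1 (p j)))

/-- The map `φ` on integer vectors. -/
noncomputable def phiZ (e : V → V → ℕ) (s : V) (p : {i : V // i ≠ s} → V) (u : {i : V // i ≠ s} → ℤ)
    (j : {i : V // i ≠ s}) : ZMod (e j.1 (p j)) :=
  ∑ i ∈ descendants e s j, (u i : ZMod (e j.1 (p j)))


set_option linter.unusedSectionVars false
set_option maxHeartbeats 1000000

section Aux
variable {e : V → V → ℕ} {s : V} {p : {i : V // i ≠ s} → V}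

lemma adj_iff {e : V → V → ℕ} (hsym : ∀ i j : V, e i j = e j i) {i k : V} :
    (graph e).Adj i k ↔ i ≠ k ∧ 0 < e i k := by
  unfold graph
  rw [SimpleGraph.fromRel_adj]
  constructor
  · rintro ⟨h, h2 | h2⟩
    · exact ⟨h, h2⟩
    · exact ⟨h, (hsym i k) ▸ h2⟩
  · rintro ⟨h, h2⟩; exact ⟨h, Or.inl h2⟩

lemma dist_split {e : V → V → ℕ} (htree : (graph e).IsTree) {a b c : V}
    (P : (graph e).Walk a b) (hlen : P.length = (graph e).dist a b) (hc : c ∈ P.support) :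
    (graph e).dist a c + (graph e).dist c b = (graph e).dist a b := by
  have hconn := htree.isConnected
  have h1 := (graph e).dist_le (P.takeUntil c hc)
  have h2 := (graph e).dist_le (P.dropUntil c hc)
  have h3 : (P.takeUntil c hc).length + (P.dropUntil c hc).length = P.length := by
    have h := congrArg SimpleGraph.Walk.length (P.take_spec hc)
    rwa [SimpleGraph.Walk.length_append] at h
  have h4 := hconn.dist_triangle (u := a) (v := c) (w := b)
  omega

lemma closer_unique {e : V → V → ℕ} (htree : (graph e).IsTree) {s x y y' : V}
    (hxy : (graph e).Adj x y) (hxy' : (graph e).Adj x y')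
    (hy : (graph e).dist y s + 1 = (graph e).dist x s)
    (hy' : (graph e).dist y' s + 1 = (graph e).dist x s) : y = y' := by
  have hconn := htree.isConnected
  obtain ⟨P, hP, hPl⟩ := hconn.exists_path_of_dist y s
  obtain ⟨P', hP', hPl'⟩ := hconn.exists_path_of_dist y' s
  have hx : x ∉ P.support := by
    intro hx
    have := dist_split htree P hPl hx
    have : (graph e).dist y x + (graph e).dist x s = (graph e).dist y s := this
    omega
  have hx' : x ∉ P'.support := by
    intro hx'
    have := dist_split htree P' hPl' hx'
    omega
  have hc : (SimpleGraph.Walk.cons hxy P).IsPath := hP.cons hx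
  have hc' : (SimpleGraph.Walk.cons hxy' P').IsPath := hP'.cons hx'
  have := (htree.existsUnique_path x s).unique hc hc'
  have hs := congrArg SimpleGraph.Walk.support this
  simp only [SimpleGraph.Walk.support_cons] at hs
  have : P.support = P'.support := by injection hs
  have h1 : P.support = y :: P.support.tail := P.support_eq_cons
  have h2 : P'.support = y' :: P'.support.tail := P'.support_eq_cons
  rw [h1, h2] at this
  injection this

lemma adj_dist_cases {e : V → V → ℕ} (htree : (graph e).IsTree) {s x y : V}
    (h : (graph e).Adj x y) :
    (graph e).dist y s + 1 = (graph e).dist x s ∨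
    (graph e).dist x s + 1 = (graph e).dist y s := by
  have hconn := htree.isConnected
  have hd1 : (graph e).dist x y = 1 := SimpleGraph.dist_eq_one_iff_adj.2 h
  have t1 := hconn.dist_triangle (u := x) (v := y) (w := s)
  have t2 := hconn.dist_triangle (u := y) (v := x) (w := s)
  have c1 : (graph e).dist y x = (graph e).dist x y := SimpleGraph.dist_comm
  have c2 : (graph e).dist s y = (graph e).dist y s := SimpleGraph.dist_comm
  rw [hd1] at t1
  have hne : (graph e).dist x s ≠ (graph e).dist y s := by
    intro heq
    obtain ⟨P, hP, hPl⟩ := hconn.exists_path_of_dist y s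
    have hx : x ∉ P.support := by
      intro hx
      have := dist_split htree P hPl hx
      have hxy0 : (graph e).dist y x = 0 := by omega
      have := (hconn.dist_eq_zero_iff (u := y) (v := x)).1 hxy0
      exact h.ne this.symm
    have hc : (SimpleGraph.Walk.cons h P).IsPath := hP.cons hx
    obtain ⟨Q, hQ, hQl⟩ := hconn.exists_path_of_dist x s
    have := (htree.existsUnique_path x s).unique hc hQ
    have := congrArg SimpleGraph.Walk.length this
    simp only [SimpleGraph.Walk.length_cons] at this
    omega
  omega


-- succeq basics
lemma succeq_refl (j : V) : succeq e s j j := by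
  simp [succeq, SimpleGraph.dist_self]

lemma succeq_trans (htree : (graph e).IsTree) {i k j : V}
    (h1 : succeq e s i k) (h2 : succeq e s k j) : succeq e s i j := by
  have hconn := htree.isConnected
  have t1 := hconn.dist_triangle (u := i) (v := k) (w := j)
  have t2 := hconn.dist_triangle (u := i) (v := j) (w := s)
  unfold succeq at *
  omega

lemma succeq_antisymm (htree : (graph e).IsTree) {i j : V}
    (h1 : succeq e s i j) (h2 : succeq e s j i) : i = j := by
  have hconn := htree.isConnected
  have hc : (graph e).dist i j = (graph e).dist j i := SimpleGraph.dist_comm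
  unfold succeq at *
  have h0 : (graph e).dist i j = 0 := by omega
  exact (hconn.dist_eq_zero_iff).1 h0

lemma not_succeq_s (htree : (graph e).IsTree) {j : V} (hj : j ≠ s) :
    ¬ succeq e s s j := by
  intro h
  have hconn := htree.isConnected
  unfold succeq at h
  rw [SimpleGraph.dist_self] at h
  have h0 : (graph e).dist j s = 0 := by omega
  exact hj ((hconn.dist_eq_zero_iff).1 h0)

lemma eq_parent (htree : (graph e).IsTree) (hp : IsParent e s p) {j : {i : V // i ≠ s}} {k : V}
    (hadj : (graph e).Adj j.1 k) (hk : (graph e).dist k s + 1 = (graph e).dist j.1 s) :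
    k = p j :=
  closer_unique htree hadj (hp j).1 hk (hp j).2

lemma succeq_parent (htree : (graph e).IsTree) (hp : IsParent e s p) (j : {i : V // i ≠ s}) :
    succeq e s j.1 (p j) := by
  have h1 : (graph e).dist j.1 (p j) = 1 := SimpleGraph.dist_eq_one_iff_adj.2 (hp j).1
  have h2 := (hp j).2
  unfold succeq
  omega

lemma succeq_parent_of_ne (htree : (graph e).IsTree) (hp : IsParent e s p)
    {i : {i : V // i ≠ s}} {j : V} (h : succeq e s i.1 j) (hne : i.1 ≠ j) :
    succeq e s (p i) j := by
  have hconn := htree.isConnected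
  have hdij : 0 < (graph e).dist i.1 j := hconn.pos_dist_of_ne hne
  obtain ⟨Q, hQ, hQl⟩ := hconn.exists_path_of_dist i.1 j
  cases Q with
  | nil => exact absurd rfl hne
  | cons h' Q' =>
    rename_i y
    have hQ'len := (graph e).dist_le Q'
    have hlen : Q'.length + 1 = (graph e).dist i.1 j := by
      simpa [SimpleGraph.Walk.length_cons] using hQl
    have t1 := hconn.dist_triangle (u := i.1) (v := y) (w := j)
    have hdy1 : (graph e).dist i.1 y = 1 := SimpleGraph.dist_eq_one_iff_adj.2 h'
    have hdyj : (graph e).dist y j + 1 = (graph e).dist i.1 j := by omega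
    have t2 := hconn.dist_triangle (u := y) (v := j) (w := s)
    have t3 := hconn.dist_triangle (u := i.1) (v := y) (w := s)
    have hys : (graph e).dist y s + 1 = (graph e).dist i.1 s := by
      unfold succeq at h; omega
    have hyp : y = p i := eq_parent htree hp h' hys
    have hps := (hp i).2
    subst hyp
    unfold succeq at *
    omega

lemma succeq_of_parent (htree : (graph e).IsTree) (hp : IsParent e s p)
    {i : {i : V // i ≠ s}} {j : V} (h : succeq e s (p i) j) : succeq e s i.1 j := by
  have hconn := htree.isConnected
  have hdy1 : (graph e).dist i.1 (p i) = 1 := SimpleGraph.dist_eq_one_iff_adj.2 (hp i).1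
  have t1 := hconn.dist_triangle (u := i.1) (v := p i) (w := j)
  have t2 := hconn.dist_triangle (u := i.1) (v := j) (w := s)
  have hps := (hp i).2
  unfold succeq at *
  omega

lemma not_succeq_parent_self (htree : (graph e).IsTree) (hp : IsParent e s p)
    (j : {i : V // i ≠ s}) : ¬ succeq e s (p j) j.1 := by
  intro h
  have hps := (hp j).2
  unfold succeq at h
  omega

/-- Key classification: a neighbour `k` of a vertex `i` in the subtree of `j`
is either in the subtree itself, or `i = j` and `k` is the parent of `j`. -/
lemma crossing (hsym : ∀ i j : V, e i j = e j i) (htree : (graph e).IsTree)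
    (hp : IsParent e s p) {i j : {i : V // i ≠ s}} {k : V}
    (hij : succeq e s i.1 j.1) (hadj : (graph e).Adj i.1 k)
    (hk : ¬ succeq e s k j.1) : i = j ∧ k = p j := by
  rcases adj_dist_cases htree (s := s) hadj with hcl | hfar
  · have hkpi : k = p i := eq_parent htree hp hadj hcl
    by_cases hij' : i = j
    · subst hij'; exact ⟨rfl, hkpi⟩
    · exfalso
      have : succeq e s (p i) j.1 := succeq_parent_of_ne htree hp hij
        (fun h => hij' (Subtype.ext h))
      rw [hkpi] at hk; exact hk this
  · exfalso
    have hconn := htree.isConnected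
    have hki : succeq e s k i.1 := by
      have h1 : (graph e).dist k i.1 = 1 := SimpleGraph.dist_eq_one_iff_adj.2 hadj.symm
      unfold succeq; omega
    exact hk (succeq_trans htree hki hij)

/-- A neighbour of `j` which is strictly farther from the sink is a child. -/
lemma child_of_far (htree : (graph e).IsTree) (hp : IsParent e s p)
    {j : {i : V // i ≠ s}} {k : V} (hadj : (graph e).Adj j.1 k)
    (hfar : (graph e).dist j.1 s + 1 = (graph e).dist k s) :
    ∃ hk : k ≠ s, p ⟨k, hk⟩ = j.1 := by
  have hconn := htree.isConnected
  have hk : k ≠ s := by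
    intro h; subst h
    rw [SimpleGraph.dist_self] at hfar; omega
  exact ⟨hk, (eq_parent htree hp (j := ⟨k, hk⟩) hadj.symm hfar).symm⟩

end Aux

section Seq
variable {e : V → V → ℕ} {s : V}

lemma applySeq_append (u : Conf s) (A B : List {i : V // i ≠ s}) :
    applySeq e s u (A ++ B) = applySeq e s (applySeq e s u A) B := by
  induction A generalizing u with
  | nil => rfl
  | cons a A ih => exact ih (toppleAt e s a u)

lemma validSeq_append {u : Conf s} {A B : List {i : V // i ≠ s}} :
    ValidSeq e s u (A ++ B) ↔ ValidSeq e s u A ∧ ValidSeq e s (applySeq e s u A) B := by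
  induction A generalizing u with
  | nil => simp [ValidSeq, applySeq]
  | cons a A ih =>
    show (deg e a.1 ≤ u a ∧ ValidSeq e s (toppleAt e s a u) (A ++ B)) ↔
      (deg e a.1 ≤ u a ∧ ValidSeq e s (toppleAt e s a u) A) ∧
        ValidSeq e s (applySeq e s (toppleAt e s a u) A) B
    rw [ih, and_assoc]

lemma toppleAt_add {u : Conf s} {i : {i : V // i ≠ s}} (h : deg e i.1 ≤ u i) (d : Conf s) :
    toppleAt e s i (u + d) = toppleAt e s i u + d := by
  funext k
  simp only [toppleAt, Pi.add_apply]
  by_cases hk : k = i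
  · subst hk; simp only [eq_self_iff_true, if_true]; omega
  · simp only [if_neg hk]; omega

lemma validSeq_add {u : Conf s} {L : List {i : V // i ≠ s}} (hL : ValidSeq e s u L)
    (d : Conf s) :
    ValidSeq e s (u + d) L ∧ applySeq e s (u + d) L = applySeq e s u L + d := by
  induction L generalizing u with
  | nil => exact ⟨trivial, rfl⟩
  | cons a L ih =>
    obtain ⟨h1, h2⟩ := hL
    have hd : deg e a.1 ≤ (u + d) a := le_trans h1 (by simp [Pi.add_apply])
    have hrw : toppleAt e s a (u + d) = toppleAt e s a u + d := toppleAt_add h1 d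
    obtain ⟨ih1, ih2⟩ := ih h2
    refine ⟨⟨hd, ?_⟩, ?_⟩
    · rw [hrw]; exact ih1
    · show applySeq e s (toppleAt e s a (u + d)) L = _
      rw [hrw]; exact ih2

lemma applySeq_not_mem {u : Conf s} {L : List {i : V // i ≠ s}} {i : {i : V // i ≠ s}}
    (h : i ∉ L) :
    applySeq e s u L i = u i + (L.map fun k => e k.1 i.1).sum := by
  induction L generalizing u with
  | nil => simp [applySeq]
  | cons a L ih =>
    have hia : i ≠ a := fun hh => h (hh ▸ (List.mem_cons_self : a ∈ a :: L))
    have hL : i ∉ L := fun hh => h (List.mem_cons_of_mem a hh)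
    simp only [applySeq, List.map_cons, List.sum_cons, ih hL, toppleAt, if_neg hia]
    omega

lemma unstable_mem {u : Conf s} {L : List {i : V // i ≠ s}} {i : {i : V // i ≠ s}}
    (hL : ValidSeq e s u L) (hst : Stable e s (applySeq e s u L)) (hi : deg e i.1 ≤ u i) :
    i ∈ L := by
  induction L generalizing u with
  | nil => exact absurd (hst i) (by simp [applySeq]; omega)
  | cons a L ih =>
    by_cases hia : i = a
    · exact hia ▸ (List.mem_cons_self : a ∈ a :: L)
    · refine List.mem_cons_of_mem a (ih hL.2 hst ?_)
      have : u i ≤ toppleAt e s a u i := by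
        simp only [toppleAt, if_neg hia]; omega
      omega

lemma toppleAt_comm {u : Conf s} {i j : {i : V // i ≠ s}} (hi : deg e i.1 ≤ u i)
    (hj : deg e j.1 ≤ u j) (hij : i ≠ j) :
    toppleAt e s i (toppleAt e s j u) = toppleAt e s j (toppleAt e s i u) := by
  funext k
  simp only [toppleAt]
  by_cases hki : k = i
  · subst hki
    simp only [eq_self_iff_true, if_true, if_neg hij, if_neg (Ne.symm hij)]
    omega
  · by_cases hkj : k = j
    · subst hkj
      simp only [eq_self_iff_true, if_true, if_neg hij, if_neg (Ne.symm hij)]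
      omega
    · simp only [if_neg hki, if_neg hkj]
      omega

lemma rearrange {u : Conf s} {M : List {i : V // i ≠ s}} {i : {i : V // i ≠ s}}
    (hM : ValidSeq e s u M) (hst : Stable e s (applySeq e s u M)) (hi : deg e i.1 ≤ u i) :
    ∃ M', ValidSeq e s u (i :: M') ∧
      applySeq e s u (i :: M') = applySeq e s u M ∧ M'.length + 1 = M.length := by
  induction M generalizing u with
  | nil => exact absurd (hst i) (by simp [applySeq]; omega)
  | cons a M ihM =>
    by_cases hia : i = a
    · subst hia; exact ⟨M, hM, rfl, rfl⟩
    · obtain ⟨ha, hMv⟩ := hM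
      have hi' : deg e i.1 ≤ toppleAt e s a u i := by
        have : u i ≤ toppleAt e s a u i := by
          simp only [toppleAt, if_neg hia]; omega
        omega
      obtain ⟨N', hN'v, hN'eq, hN'len⟩ := ihM hMv hst hi'
      refine ⟨a :: N', ⟨hi, ?_, ?_⟩, ?_, by simp [hN'len.symm]⟩
      · show deg e a.1 ≤ toppleAt e s i u a
        have : u a ≤ toppleAt e s i u a := by
          simp only [toppleAt, if_neg (Ne.symm hia)]; omega
        omega
      · show ValidSeq e s (toppleAt e s a (toppleAt e s i u)) N'
        rw [← toppleAt_comm hi ha hia]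
        exact hN'v.2
      · show applySeq e s (toppleAt e s a (toppleAt e s i u)) N' = _
        rw [← toppleAt_comm hi ha hia]
        exact hN'eq

lemma stab_unique_aux : ∀ n {u : Conf s} {L M : List {i : V // i ≠ s}}, L.length = n →
    ValidSeq e s u L → Stable e s (applySeq e s u L) →
    ValidSeq e s u M → Stable e s (applySeq e s u M) →
    applySeq e s u L = applySeq e s u M := by
  intro n
  induction n with
  | zero =>
    intro u L M hlen hLv hLs hMv hMs
    rw [List.length_eq_zero_iff] at hlen
    subst hlen
    cases M with
    | nil => rfl
    | cons a M =>
      exact absurd (hLs a) (by simp [applySeq]; have := hMv.1; omega)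
  | succ n ih =>
    intro u L M hlen hLv hLs hMv hMs
    cases L with
    | nil => simp at hlen
    | cons a L =>
      obtain ⟨M', hM'v, hM'eq, hM'len⟩ := rearrange hMv hMs hLv.1
      rw [← hM'eq]
      show applySeq e s (toppleAt e s a u) L = applySeq e s (toppleAt e s a u) M'
      have hMs' : Stable e s (applySeq e s (toppleAt e s a u) M') := hM'eq ▸ hMs
      exact ih (by simpa using hlen) hLv.2 hLs hM'v.2 hMs'

lemma rtg_list {u v : Conf s} (h : Relation.ReflTransGen (Topple e s) u v) :
    ∃ L, ValidSeq e s u L ∧ applySeq e s u L = v := by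
  induction h with
  | refl => exact ⟨[], trivial, rfl⟩
  | tail _ hstep ih =>
    obtain ⟨L, hLv, hLeq⟩ := ih
    obtain ⟨i, hi, hieq⟩ := hstep
    refine ⟨L ++ [i], ?_, ?_⟩
    · rw [validSeq_append]
      exact ⟨hLv, by rw [hLeq]; exact ⟨hi, trivial⟩⟩
    · rw [applySeq_append, hLeq, hieq]; rfl

/-- uniqueness of stabilization. -/
lemma sigma_eq {σ : Conf s → Conf s} (hσ : IsStabilization e s σ) {u : Conf s}
    {L : List {i : V // i ≠ s}} (hLv : ValidSeq e s u L) (hLs : Stable e s (applySeq e s u L)) :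
    σ u = applySeq e s u L := by
  obtain ⟨M, hMv, hMeq⟩ := rtg_list (hσ u).2
  have hMs : Stable e s (applySeq e s u M) := hMeq ▸ (hσ u).1
  rw [← hMeq]
  exact (stab_unique_aux L.length rfl hLv hLs hMv hMs).symm

end Seq

section Phi
variable {e : V → V → ℕ} {s : V} {p : {i : V // i ≠ s} → V}

lemma mem_descendants {j i : {i : V // i ≠ s}} :
    i ∈ descendants e s j ↔ succeq e s i.1 j.1 := by
  simp [descendants]

lemma e_parent_pos (hsym : ∀ i j : V, e i j = e j i) (hp : IsParent e s p)
    (j : {i : V // i ≠ s}) : 0 < e j.1 (p j) := ((adj_iff hsym).1 (hp j).1).2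

lemma parent_ne (hp : IsParent e s p) (j : {i : V // i ≠ s}) : p j ≠ j.1 :=
  (hp j).1.ne'

lemma deg_eq_sum_desc (hsym : ∀ i j : V, e i j = e j i) (htree : (graph e).IsTree)
    (hp : IsParent e s p) {i j : {i : V // i ≠ s}} (hij : succeq e s i.1 j.1) :
    deg e i.1 = e i.1 i.1 + (∑ k ∈ (descendants e s j).erase i, e i.1 k.1) +
      (if i = j then e j.1 (p j) else 0) := by
  classical
  have hbase : deg e i.1 = e i.1 i.1 + ∑ k ∈ Finset.univ.erase i.1, e i.1 k := by
    rw [deg, ← Finset.add_sum_erase Finset.univ (fun k => e i.1 k) (Finset.mem_univ i.1)]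
  have himg : ∑ k ∈ ((descendants e s j).erase i).image Subtype.val, e i.1 k
      = ∑ k ∈ (descendants e s j).erase i, e i.1 k.1 := by
    apply Finset.sum_image
    intro a _ b _ hab
    exact Subtype.ext hab
  by_cases hieq : i = j
  · subst hieq
    have hpmem : p i ∈ Finset.univ.erase i.1 :=
      Finset.mem_erase.2 ⟨parent_ne hp i, Finset.mem_univ _⟩
    rw [hbase, ← Finset.add_sum_erase _ (fun k => e i.1 k) hpmem, if_pos rfl]
    have hsub : ∑ k ∈ (Finset.univ.erase i.1).erase (p i), e i.1 k
        = ∑ k ∈ ((descendants e s i).erase i).image Subtype.val, e i.1 k := by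
      refine (Finset.sum_subset ?_ ?_).symm
      · intro k hk
        obtain ⟨k', hk', hval⟩ := Finset.mem_image.1 hk
        obtain ⟨hkne, hkd⟩ := Finset.mem_erase.1 hk'
        refine Finset.mem_erase.2 ⟨?_, Finset.mem_erase.2 ⟨?_, Finset.mem_univ _⟩⟩
        · intro hkp
          rw [← hval] at hkp
          exact not_succeq_parent_self htree hp i
            (hkp ▸ (mem_descendants.1 hkd))
        · rw [← hval]
          exact fun h => hkne (Subtype.ext h)
      · intro k hk hknot
        obtain ⟨hkp, hkmem⟩ := Finset.mem_erase.1 hk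
        obtain ⟨hki, _⟩ := Finset.mem_erase.1 hkmem
        by_contra hpos
        have hpos' : 0 < e i.1 k := Nat.pos_of_ne_zero hpos
        have hadj : (graph e).Adj i.1 k := (adj_iff hsym).2 ⟨fun h => hki h.symm, hpos'⟩
        by_cases hks : succeq e s k i.1
        · have hkns : k ≠ s := fun h => not_succeq_s htree i.2 (h ▸ hks)
          apply hknot
          refine Finset.mem_image.2 ⟨⟨k, hkns⟩, Finset.mem_erase.2 ⟨?_, mem_descendants.2 hks⟩, rfl⟩
          exact fun h => hki (congrArg Subtype.val h)
        · exact hkp (crossing hsym htree hp (succeq_refl i.1) hadj hks).2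
    rw [hsub, himg]
    ring
  · rw [hbase, if_neg hieq, add_zero]
    have hsub : ∑ k ∈ Finset.univ.erase i.1, e i.1 k
        = ∑ k ∈ ((descendants e s j).erase i).image Subtype.val, e i.1 k := by
      refine (Finset.sum_subset ?_ ?_).symm
      · intro k hk
        obtain ⟨k', hk', hval⟩ := Finset.mem_image.1 hk
        obtain ⟨hkne, _⟩ := Finset.mem_erase.1 hk'
        refine Finset.mem_erase.2 ⟨?_, Finset.mem_univ _⟩
        rw [← hval]
        exact fun h => hkne (Subtype.ext h)
      · intro k hk hknot
        obtain ⟨hki, _⟩ := Finset.mem_erase.1 hk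
        by_contra hpos
        have hpos' : 0 < e i.1 k := Nat.pos_of_ne_zero hpos
        have hadj : (graph e).Adj i.1 k := (adj_iff hsym).2 ⟨fun h => hki h.symm, hpos'⟩
        by_cases hks : succeq e s k j.1
        · have hkns : k ≠ s := fun h => not_succeq_s htree j.2 (h ▸ hks)
          apply hknot
          refine Finset.mem_image.2 ⟨⟨k, hkns⟩, Finset.mem_erase.2 ⟨?_, mem_descendants.2 hks⟩, rfl⟩
          exact fun h => hki (congrArg Subtype.val h)
        · exact hieq (crossing hsym htree hp hij hadj hks).1
    rw [hsub, himg]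

lemma phi_toppleAt (hsym : ∀ i j : V, e i j = e j i) (htree : (graph e).IsTree)
    (hp : IsParent e s p) {u : Conf s} {i : {i : V // i ≠ s}} (hi : deg e i.1 ≤ u i) :
    phi e s p (toppleAt e s i u) = phi e s p u := by
  funext j
  unfold phi
  by_cases hij : succeq e s i.1 j.1
  · have him : i ∈ descendants e s j := mem_descendants.2 hij
    rw [← Finset.add_sum_erase _ (fun k => ((toppleAt e s i u k : ℕ) : ZMod (e j.1 (p j)))) him,
      ← Finset.add_sum_erase _ (fun k => ((u k : ℕ) : ZMod (e j.1 (p j)))) him]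
    have h1 : toppleAt e s i u i = u i - deg e i.1 + e i.1 i.1 := by
      simp [toppleAt]
    have h2 : ∀ k ∈ (descendants e s j).erase i,
        ((toppleAt e s i u k : ℕ) : ZMod (e j.1 (p j)))
          = ((u k : ℕ) : ZMod (e j.1 (p j))) + ((e i.1 k.1 : ℕ) : ZMod (e j.1 (p j))) := by
      intro k hk
      have hki : k ≠ i := (Finset.mem_erase.1 hk).1
      simp [toppleAt, if_neg hki]
    rw [Finset.sum_congr rfl h2, Finset.sum_add_distrib, h1]
    rw [Nat.cast_add, Nat.cast_sub hi]
    have key : ((deg e i.1 : ℕ) : ZMod (e j.1 (p j)))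
        = (e i.1 i.1 : ZMod (e j.1 (p j))) + ∑ k ∈ (descendants e s j).erase i,
            ((e i.1 k.1 : ℕ) : ZMod (e j.1 (p j))) := by
      rw [deg_eq_sum_desc hsym htree hp hij]
      push_cast
      by_cases hieq : i = j
      · rw [if_pos hieq, ZMod.natCast_self]; ring
      · rw [if_neg hieq]; push_cast; ring
    rw [key]
    ring
  · have h2 : ∀ k ∈ descendants e s j,
        ((toppleAt e s i u k : ℕ) : ZMod (e j.1 (p j)))
          = ((u k : ℕ) : ZMod (e j.1 (p j))) + ((e i.1 k.1 : ℕ) : ZMod (e j.1 (p j))) := by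
      intro k hk
      have hki : k ≠ i := fun h => hij (h ▸ mem_descendants.1 hk)
      simp [toppleAt, if_neg hki]
    rw [Finset.sum_congr rfl h2, Finset.sum_add_distrib]
    have hz : ∑ k ∈ descendants e s j, ((e i.1 k.1 : ℕ) : ZMod (e j.1 (p j))) = 0 := by
      apply Finset.sum_eq_zero
      intro k hk
      by_cases hpos : e i.1 k.1 = 0
      · rw [hpos]; exact Nat.cast_zero
      · have hpos' : 0 < e k.1 i.1 := by rw [hsym]; exact Nat.pos_of_ne_zero hpos
        have hne : k.1 ≠ i.1 := by
          intro h
          exact hij (h ▸ mem_descendants.1 hk)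
        have hadj : (graph e).Adj k.1 i.1 := (adj_iff hsym).2 ⟨hne, hpos'⟩
        obtain ⟨hkj, hipj⟩ := crossing hsym htree hp (mem_descendants.1 hk) hadj hij
        rw [hipj, hkj, hsym, ZMod.natCast_self]
    rw [hz, add_zero]

lemma phi_validSeq (hsym : ∀ i j : V, e i j = e j i) (htree : (graph e).IsTree)
    (hp : IsParent e s p) {u : Conf s} {L : List {i : V // i ≠ s}} (hL : ValidSeq e s u L) :
    phi e s p (applySeq e s u L) = phi e s p u := by
  induction L generalizing u with
  | nil => rfl
  | cons a L ih =>
    have := ih hL.2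
    rw [applySeq] at *
    rw [this, phi_toppleAt hsym htree hp hL.1]

lemma phi_sigma (hsym : ∀ i j : V, e i j = e j i) (htree : (graph e).IsTree)
    (hp : IsParent e s p) {σ : Conf s → Conf s} (hσ : IsStabilization e s σ) (u : Conf s) :
    phi e s p (σ u) = phi e s p u := by
  obtain ⟨L, hLv, hLeq⟩ := rtg_list (hσ u).2
  rw [← hLeq, phi_validSeq hsym htree hp hLv]

lemma phi_add (u v : Conf s) : phi e s p (u + v) = phi e s p u + phi e s p v := by
  funext j
  simp only [phi, Pi.add_apply, Nat.cast_add, Finset.sum_add_distrib]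

end Phi

section Lower

lemma exists_first_latest {α : Type*} [DecidableEq α] :
    ∀ (M : List α) (S : Finset α), (∀ i ∈ S, i ∈ M) → S.Nonempty →
      ∃ i₀ ∈ S, ∃ P Q, M = P ++ i₀ :: Q ∧ i₀ ∉ P ∧ ∀ i ∈ S, i ≠ i₀ → i ∈ P := by
  intro M
  induction M with
  | nil =>
    intro S hmem ⟨x, hx⟩
    exact absurd (hmem x hx) List.not_mem_nil
  | cons a M ih =>
    intro S hmem hS
    by_cases hea : (S.erase a).Nonempty
    · have hmem' : ∀ i ∈ S.erase a, i ∈ M := by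
        intro i hi
        obtain ⟨hia, hiS⟩ := Finset.mem_erase.1 hi
        rcases List.mem_cons.1 (hmem i hiS) with h | h
        · exact absurd h hia
        · exact h
      obtain ⟨i₀, hi₀, P', Q', hMeq, hi₀P, hall⟩ := ih (S.erase a) hmem' hea
      obtain ⟨hi₀a, hi₀S⟩ := Finset.mem_erase.1 hi₀
      refine ⟨i₀, hi₀S, a :: P', Q', by rw [hMeq]; rfl, ?_, ?_⟩
      · intro h
        rcases List.mem_cons.1 h with h | h
        · exact hi₀a h
        · exact hi₀P h
      · intro i hiS hii₀
        by_cases hia : i = a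
        · exact hia ▸ (List.mem_cons_self : a ∈ a :: P')
        · exact List.mem_cons_of_mem a (hall i (Finset.mem_erase.2 ⟨hia, hiS⟩) hii₀)
    · obtain ⟨x, hx⟩ := hS
      have hxa : x = a := by
        by_contra hne
        exact hea ⟨x, Finset.mem_erase.2 ⟨hne, hx⟩⟩
      subst hxa
      refine ⟨x, hx, [], M, rfl, List.not_mem_nil, ?_⟩
      intro i hiS hix
      exfalso
      exact hea ⟨i, Finset.mem_erase.2 ⟨fun h => hix h, hiS⟩⟩

lemma finset_sum_le_list_sum {α : Type*} [DecidableEq α] (f : α → ℕ) :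
    ∀ (B : List α) (T : Finset α), (∀ x ∈ T, x ∈ B) → ∑ x ∈ T, f x ≤ (B.map f).sum := by
  intro B
  induction B with
  | nil =>
    intro T hmem
    have : T = ∅ := Finset.eq_empty_of_forall_notMem
      (fun x hx => List.not_mem_nil (hmem x hx))
    simp [this]
  | cons b B ih =>
    intro T hmem
    have h1 : ∀ x ∈ T.erase b, x ∈ B := by
      intro x hx
      obtain ⟨hxb, hxT⟩ := Finset.mem_erase.1 hx
      rcases List.mem_cons.1 (hmem x hxT) with h | h
      · exact absurd h hxb
      · exact h
    have h2 := ih (T.erase b) h1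
    have h3 : ∑ x ∈ T, f x ≤ f b + ∑ x ∈ T.erase b, f x := by
      by_cases hb : b ∈ T
      · rw [Finset.add_sum_erase _ f hb]
      · rw [Finset.erase_eq_of_notMem hb]; omega
    simp only [List.map_cons, List.sum_cons]
    omega

variable {e : V → V → ℕ} {s : V} {p : {i : V // i ≠ s} → V} {σ : Conf s → Conf s}

lemma recurrent_lower (hsym : ∀ i j : V, e i j = e j i) (htree : (graph e).IsTree)
    (hp : IsParent e s p) (hσ : IsStabilization e s σ) {u : Conf s}
    (hrec : Recurrent e s σ u) (j₀ : {i : V // i ≠ s}) :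
    deg e j₀.1 ≤ u j₀ + e j₀.1 (p j₀) := by
  obtain ⟨hstab, hreach⟩ := hrec
  obtain ⟨w, hw⟩ := hreach (fun j => deg e j.1)
  set u0 : Conf s := (fun j => deg e j.1) + w with hu0
  obtain ⟨L, hLv, hLeq⟩ := rtg_list (hσ u0).2
  rw [hw] at hLeq
  have hLs : Stable e s (applySeq e s u0 L) := hLeq ▸ hstab
  have hS : ∀ i ∈ descendants e s j₀, i ∈ L := by
    intro i _
    refine unstable_mem hLv hLs ?_
    simp [hu0, Pi.add_apply]
  have hSrev : ∀ i ∈ descendants e s j₀, i ∈ L.reverse := by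
    intro i hi; exact List.mem_reverse.2 (hS i hi)
  have hSne : (descendants e s j₀).Nonempty :=
    ⟨j₀, mem_descendants.2 (succeq_refl j₀.1)⟩
  obtain ⟨i₀, hi₀S, P, Q, hMeq, hi₀P, hall⟩ :=
    exists_first_latest L.reverse (descendants e s j₀) hSrev hSne
  have hLdec : L = Q.reverse ++ i₀ :: P.reverse := by
    have := congrArg List.reverse hMeq
    simpa [List.reverse_append] using this
  set A := Q.reverse
  set B := P.reverse
  have hi₀B : i₀ ∉ B := fun h => hi₀P (List.mem_reverse.1 h)
  have hallB : ∀ i ∈ (descendants e s j₀).erase i₀, i ∈ B := by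
    intro i hi
    obtain ⟨hii₀, hiS⟩ := Finset.mem_erase.1 hi
    exact List.mem_reverse.2 (hall i hiS hii₀)
  have hval : applySeq e s u0 L i₀ =
      toppleAt e s i₀ (applySeq e s u0 A) i₀ + (B.map fun k => e k.1 i₀.1).sum := by
    rw [hLdec, applySeq_append]
    show applySeq e s (toppleAt e s i₀ (applySeq e s u0 A)) B i₀ = _
    exact applySeq_not_mem hi₀B
  have htop : toppleAt e s i₀ (applySeq e s u0 A) i₀
      = applySeq e s u0 A i₀ - deg e i₀.1 + e i₀.1 i₀.1 := by
    simp [toppleAt]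
  have hfsum : ∑ k ∈ (descendants e s j₀).erase i₀, e k.1 i₀.1
      ≤ (B.map fun k => e k.1 i₀.1).sum :=
    finset_sum_le_list_sum _ B _ hallB
  have hcongr : ∑ k ∈ (descendants e s j₀).erase i₀, e k.1 i₀.1
      = ∑ k ∈ (descendants e s j₀).erase i₀, e i₀.1 k.1 :=
    Finset.sum_congr rfl (fun k _ => hsym k.1 i₀.1)
  have hdeg := deg_eq_sum_desc hsym htree hp (mem_descendants.1 hi₀S)
  have hui₀ : u i₀ = applySeq e s u0 L i₀ := by rw [hLeq]
  have hlt := hstab i₀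
  by_cases hieq : i₀ = j₀
  · subst hieq
    rw [if_pos rfl] at hdeg
    omega
  · rw [if_neg hieq] at hdeg
    omega

end Lower

section Wave
variable {e : V → V → ℕ} {s : V} {p : {i : V // i ≠ s} → V}

/-- add `m` grains at `j`. -/
def single (s : V) (j : {i : V // i ≠ s}) (m : ℕ) : Conf s := fun k => if k = j then m else 0

/-- what the parent receives when `j` topples (nothing recorded if the parent is the sink). -/
def parentDelta (e : V → V → ℕ) (s : V) (p : {i : V // i ≠ s} → V) (j : {i : V // i ≠ s}) :
    Conf s := fun k => if k.1 = p j then e j.1 (p j) else 0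

def childrenOf (e : V → V → ℕ) (s : V) (p : {i : V // i ≠ s} → V) (j : {i : V // i ≠ s}) :
    Finset {i : V // i ≠ s} := Finset.univ.filter fun c => p c = j.1

lemma mem_childrenOf {j c : {i : V // i ≠ s}} :
    c ∈ childrenOf e s p j ↔ p c = j.1 := by simp [childrenOf]

lemma child_succeq (htree : (graph e).IsTree) (hp : IsParent e s p)
    {c j : {i : V // i ≠ s}} (hc : p c = j.1) : succeq e s c.1 j.1 :=
  hc ▸ succeq_parent htree hp c

lemma child_ne (hp : IsParent e s p) {c j : {i : V // i ≠ s}} (hc : p c = j.1) : c ≠ j := by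
  intro h; subst h; exact parent_ne hp c hc

lemma parent_not_desc (htree : (graph e).IsTree) (hp : IsParent e s p)
    {c j : {i : V // i ≠ s}} (hc : p c = j.1) : ¬ succeq e s j.1 c.1 := by
  intro h
  have h2 : succeq e s c.1 j.1 := child_succeq htree hp hc
  exact child_ne hp hc (Subtype.ext (succeq_antisymm htree h2 h))

lemma sibling_not_desc (htree : (graph e).IsTree) (hp : IsParent e s p)
    {c c' j : {i : V // i ≠ s}} (hc : p c = j.1) (hc' : p c' = j.1) (hne : c' ≠ c) :
    ¬ succeq e s c'.1 c.1 := by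
  intro h
  have h1 : succeq e s (p c') c.1 :=
    succeq_parent_of_ne htree hp h (fun hh => hne (Subtype.ext hh))
  rw [hc'] at h1
  exact parent_not_desc htree hp hc h1

lemma pj_not_child (htree : (graph e).IsTree) (hp : IsParent e s p)
    {j k : {i : V // i ≠ s}} (hk : k.1 = p j) : p k ≠ j.1 := by
  intro h
  have h1 : succeq e s k.1 j.1 := child_succeq htree hp h
  rw [hk] at h1
  exact not_succeq_parent_self htree hp j h1

lemma desc_child_subset (htree : (graph e).IsTree) (hp : IsParent e s p)
    {c j : {i : V // i ≠ s}} (hc : p c = j.1) :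
    descendants e s c ⊆ descendants e s j := by
  intro i hi
  exact mem_descendants.2 (succeq_trans htree (mem_descendants.1 hi) (child_succeq htree hp hc))

lemma card_desc_child_lt (htree : (graph e).IsTree) (hp : IsParent e s p)
    {c j : {i : V // i ≠ s}} (hc : p c = j.1) :
    (descendants e s c).card < (descendants e s j).card := by
  apply Finset.card_lt_card
  refine ⟨desc_child_subset htree hp hc, fun hsub => ?_⟩
  have hj : j ∈ descendants e s j := mem_descendants.2 (succeq_refl j.1)
  exact parent_not_desc htree hp hc (mem_descendants.1 (hsub hj))

lemma deg_split (hsym : ∀ i j : V, e i j = e j i) (htree : (graph e).IsTree)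
    (hp : IsParent e s p) (j : {i : V // i ≠ s}) :
    deg e j.1 = e j.1 j.1 + e j.1 (p j) + ∑ c ∈ childrenOf e s p j, e j.1 c.1 := by
  classical
  have hbase : deg e j.1 = e j.1 j.1 + ∑ k ∈ Finset.univ.erase j.1, e j.1 k := by
    rw [deg, ← Finset.add_sum_erase Finset.univ (fun k => e j.1 k) (Finset.mem_univ j.1)]
  have hpmem : p j ∈ Finset.univ.erase j.1 :=
    Finset.mem_erase.2 ⟨parent_ne hp j, Finset.mem_univ _⟩
  rw [hbase, ← Finset.add_sum_erase _ (fun k => e j.1 k) hpmem]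
  have himg : ∑ k ∈ (childrenOf e s p j).image Subtype.val, e j.1 k
      = ∑ c ∈ childrenOf e s p j, e j.1 c.1 := by
    apply Finset.sum_image
    intro a _ b _ hab
    exact Subtype.ext hab
  have hsub : ∑ k ∈ (Finset.univ.erase j.1).erase (p j), e j.1 k
      = ∑ k ∈ (childrenOf e s p j).image Subtype.val, e j.1 k := by
    refine (Finset.sum_subset ?_ ?_).symm
    · intro k hk
      obtain ⟨c, hc, hval⟩ := Finset.mem_image.1 hk
      have hcj := mem_childrenOf.1 hc
      refine Finset.mem_erase.2 ⟨?_, Finset.mem_erase.2 ⟨?_, Finset.mem_univ _⟩⟩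
      · rw [← hval]; exact fun h => pj_not_child htree hp h hcj
      · rw [← hval]
        exact fun h => child_ne hp hcj (Subtype.ext h)
    · intro k hk hknot
      obtain ⟨hkp, hkmem⟩ := Finset.mem_erase.1 hk
      obtain ⟨hkj, _⟩ := Finset.mem_erase.1 hkmem
      by_contra hpos
      have hadj : (graph e).Adj j.1 k :=
        (adj_iff hsym).2 ⟨fun h => hkj h.symm, Nat.pos_of_ne_zero hpos⟩
      rcases adj_dist_cases htree (s := s) hadj with hcl | hfar
      · exact hkp (eq_parent htree hp hadj hcl)
      · obtain ⟨hks, hpk⟩ := child_of_far htree hp hadj hfar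
        exact hknot (Finset.mem_image.2 ⟨⟨k, hks⟩, mem_childrenOf.2 hpk, rfl⟩)
  rw [hsub, himg]
  ring

/-- the statement that subtree waves work below `j`. -/
def WaveProp (e : V → V → ℕ) (s : V) (p : {i : V // i ≠ s} → V) (u : Conf s)
    (j : {i : V // i ≠ s}) : Prop :=
  ∃ L : List {i : V // i ≠ s}, ∀ w : Conf s, (∀ i ∈ descendants e s j, w i = u i) →
    ValidSeq e s (w + single s j (e j.1 (p j))) L ∧
    applySeq e s (w + single s j (e j.1 (p j))) L = w + parentDelta e s p j

lemma childSeq (hsym : ∀ i j : V, e i j = e j i) (htree : (graph e).IsTree)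
    (hp : IsParent e s p) {u : Conf s} (j : {i : V // i ≠ s}) :
    ∀ cs : List {i : V // i ≠ s}, cs.Nodup → (∀ c ∈ cs, p c = j.1) →
      (∀ c ∈ cs, WaveProp e s p u c) →
      ∃ L : List {i : V // i ≠ s}, ∀ dbase : Conf s,
        (∀ c ∈ cs, ∀ i ∈ descendants e s c, dbase i = u i) →
        ValidSeq e s (dbase + fun k => if k ∈ cs then e k.1 j.1 else 0) L ∧
        applySeq e s (dbase + fun k => if k ∈ cs then e k.1 j.1 else 0) L
          = dbase + single s j (cs.map fun c => e c.1 j.1).sum := by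
  intro cs
  induction cs with
  | nil =>
    intro _ _ _
    refine ⟨[], fun dbase _ => ⟨trivial, ?_⟩⟩
    show dbase + _ = _
    funext k
    simp [single]
  | cons c cs ih =>
    intro hnd hch hwp
    have hcnotmem : c ∉ cs := (List.nodup_cons.1 hnd).1
    obtain ⟨Lc, hLc⟩ := hwp c (List.mem_cons_self : c ∈ c :: cs)
    obtain ⟨Lih, hLih⟩ := ih (List.nodup_cons.1 hnd).2
      (fun c' hc' => hch c' (List.mem_cons_of_mem c hc'))
      (fun c' hc' => hwp c' (List.mem_cons_of_mem c hc'))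
    have hpc : p c = j.1 := hch c (List.mem_cons_self : c ∈ c :: cs)
    refine ⟨Lc ++ Lih, fun dbase hdb => ?_⟩
    have eq1 : (dbase + fun k => if k ∈ c :: cs then e k.1 j.1 else 0)
        = (dbase + fun k => if k ∈ cs then e k.1 j.1 else 0) + single s c (e c.1 (p c)) := by
      funext k
      simp only [Pi.add_apply, single, hpc]
      by_cases hkc : k = c
      · subst hkc
        simp only [if_pos (List.mem_cons_self : k ∈ k :: cs), if_neg hcnotmem, eq_self_iff_true, if_true]
        omega
      · have : (k ∈ c :: cs) ↔ (k ∈ cs) := by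
          constructor
          · intro h; rcases List.mem_cons.1 h with h | h
            · exact absurd h hkc
            · exact h
          · exact List.mem_cons_of_mem c
        simp only [if_neg hkc, this]
        omega
    have hagree : ∀ i ∈ descendants e s c,
        (dbase + fun k => if k ∈ cs then e k.1 j.1 else 0) i = u i := by
      intro i hi
      have h1 : dbase i = u i := hdb c (List.mem_cons_self : c ∈ c :: cs) i hi
      have h2 : i ∉ cs := by
        intro h
        have : i ≠ c := fun hic => hcnotmem (hic ▸ h)
        exact sibling_not_desc htree hp hpc (hch i (List.mem_cons_of_mem c h)) this
          (mem_descendants.1 hi)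
      simp only [Pi.add_apply, if_neg h2, h1, add_zero]
    obtain ⟨hv1, he1⟩ := hLc _ hagree
    have eq2 : (dbase + fun k => if k ∈ cs then e k.1 j.1 else 0) + parentDelta e s p c
        = (dbase + single s j (e c.1 j.1)) + fun k => if k ∈ cs then e k.1 j.1 else 0 := by
      funext k
      simp only [Pi.add_apply, parentDelta, single, hpc]
      by_cases hkj : k = j
      · have h1 : k.1 = j.1 := congrArg Subtype.val hkj
        simp only [if_pos hkj, if_pos h1]
        omega
      · have h1 : ¬ (k.1 = j.1) := fun h => hkj (Subtype.ext h)
        simp only [if_neg hkj, if_neg h1]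
        omega
    have hagree2 : ∀ c' ∈ cs, ∀ i ∈ descendants e s c',
        (dbase + single s j (e c.1 j.1)) i = u i := by
      intro c' hc' i hi
      have h1 : dbase i = u i := hdb c' (List.mem_cons_of_mem c hc') i hi
      have h2 : i ≠ j := by
        intro h
        exact parent_not_desc htree hp (hch c' (List.mem_cons_of_mem c hc'))
          (h ▸ mem_descendants.1 hi)
      simp only [Pi.add_apply, single, if_neg h2, h1, add_zero]
    obtain ⟨hv2, he2⟩ := hLih _ hagree2
    have eq3 : (dbase + single s j (e c.1 j.1)) + single s j ((cs.map fun c => e c.1 j.1).sum)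
        = dbase + single s j (((c :: cs).map fun c => e c.1 j.1).sum) := by
      funext k
      simp only [Pi.add_apply, single, List.map_cons, List.sum_cons]
      by_cases hkj : k = j
      · simp only [if_pos hkj]; try omega
      · simp only [if_neg hkj]; try omega
    constructor
    · rw [validSeq_append, eq1]
      refine ⟨hv1, ?_⟩
      rw [he1, eq2]
      exact hv2
    · rw [eq1, applySeq_append, he1, eq2, he2, eq3]

theorem wave (hsym : ∀ i j : V, e i j = e j i) (htree : (graph e).IsTree)
    (hp : IsParent e s p) {u : Conf s} (hu : ∀ i, deg e i.1 ≤ u i + e i.1 (p i)) :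
    ∀ j, WaveProp e s p u j := by
  suffices H : ∀ n j, (descendants e s j).card ≤ n → WaveProp e s p u j by
    exact fun j => H (descendants e s j).card j le_rfl
  intro n
  induction n with
  | zero =>
    intro j hj
    have : j ∈ descendants e s j := mem_descendants.2 (succeq_refl j.1)
    have := Finset.card_pos.2 ⟨j, this⟩
    omega
  | succ n ihn =>
    intro j hj
    set cs := (childrenOf e s p j).toList with hcs
    have hnd : cs.Nodup := Finset.nodup_toList _
    have hch : ∀ c ∈ cs, p c = j.1 := by
      intro c hc
      exact mem_childrenOf.1 (Finset.mem_toList.1 hc)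
    have hwp : ∀ c ∈ cs, WaveProp e s p u c := by
      intro c hc
      have hlt := card_desc_child_lt htree hp (mem_childrenOf.1 (Finset.mem_toList.1 hc))
      exact ihn c (by omega)
    obtain ⟨Lcs, hLcs⟩ := childSeq hsym htree hp j cs hnd hch hwp
    refine ⟨j :: Lcs, fun w hw => ?_⟩
    have hwj : w j = u j := hw j (mem_descendants.2 (succeq_refl j.1))
    have hvalhead : deg e j.1 ≤ (w + single s j (e j.1 (p j))) j := by
      simp only [Pi.add_apply, single, eq_self_iff_true, if_true, hwj]
      exact hu j
    set wtop : Conf s :=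
      fun k => if k = j then u j + e j.1 (p j) + e j.1 j.1 - deg e j.1 else w k with hwtop
    set dbase : Conf s := wtop + parentDelta e s p j with hdbase
    have hstep : toppleAt e s j (w + single s j (e j.1 (p j)))
        = dbase + fun k => if k ∈ cs then e k.1 j.1 else 0 := by
      funext k
      simp only [toppleAt, hdbase, hwtop, Pi.add_apply, parentDelta, single]
      by_cases hkj : k = j
      · subst hkj
        have h1 : ¬ (k.1 = p k) := fun h => parent_ne hp k h.symm
        have h2 : k ∉ cs := fun h => parent_ne hp k (hch k h)
        simp only [eq_self_iff_true, if_true, if_neg h1, if_neg h2]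
        have := hu k
        omega
      · simp only [if_neg hkj]
        by_cases hkp : k.1 = p j
        · have h2 : k ∉ cs := fun h => pj_not_child htree hp hkp (hch k h)
          simp only [if_pos hkp, if_neg h2]
          rw [hkp]
          try omega
        · by_cases hkc : k ∈ cs
          · simp only [if_neg hkp, if_pos hkc]
            rw [hsym]
            try omega
          · simp only [if_neg hkp, if_neg hkc]
            have hz : e j.1 k.1 = 0 := by
              by_contra hpos
              have hadj : (graph e).Adj j.1 k.1 := (adj_iff hsym).2
                ⟨fun h => hkj (Subtype.ext h.symm), Nat.pos_of_ne_zero hpos⟩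
              rcases adj_dist_cases htree (s := s) hadj with hcl | hfar
              · exact hkp (eq_parent htree hp hadj hcl)
              · obtain ⟨hks, hpk⟩ := child_of_far htree hp hadj hfar
                apply hkc
                rw [hcs]
                refine Finset.mem_toList.2 (mem_childrenOf.2 ?_)
                have : (⟨k.1, hks⟩ : {i : V // i ≠ s}) = k := Subtype.ext rfl
                rw [this] at hpk
                exact hpk
            rw [hz]
            try omega
    have hdb : ∀ c ∈ cs, ∀ i ∈ descendants e s c, dbase i = u i := by
      intro c hc i hi
      have hij : i ≠ j := by
        intro h
        exact parent_not_desc htree hp (hch c hc) (h ▸ mem_descendants.1 hi)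
      have hipj : ¬ (i.1 = p j) := by
        intro h
        have h1 : succeq e s (p j) c.1 := h ▸ mem_descendants.1 hi
        have h2 : succeq e s c.1 j.1 := child_succeq htree hp (hch c hc)
        exact not_succeq_parent_self htree hp j (succeq_trans htree h1 h2)
      have hidj : i ∈ descendants e s j :=
        desc_child_subset htree hp (hch c hc) hi
      simp only [hdbase, hwtop, Pi.add_apply, parentDelta, if_neg hij, if_neg hipj,
        hw i hidj, add_zero]
    obtain ⟨hv, heq⟩ := hLcs dbase hdb
    have eq3 : dbase + single s j ((cs.map fun c => e c.1 j.1).sum)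
        = w + parentDelta e s p j := by
      have hsum : (cs.map fun c => e c.1 j.1).sum = ∑ c ∈ childrenOf e s p j, e j.1 c.1 := by
        rw [hcs]
        rw [Finset.sum_map_toList]
        exact Finset.sum_congr rfl (fun c _ => hsym c.1 j.1)
      funext k
      simp only [hdbase, hwtop, Pi.add_apply, parentDelta, single]
      by_cases hkj : k = j
      · subst hkj
        have h1 : ¬ (k.1 = p k) := fun h => parent_ne hp k h.symm
        simp only [eq_self_iff_true, if_true, if_neg h1]
        have hds := deg_split hsym htree hp k
        have := hu k
        rw [hsum]
        omega
      · simp only [if_neg hkj]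
        omega
    refine ⟨⟨hvalhead, ?_⟩, ?_⟩
    · show ValidSeq e s (toppleAt e s j (w + single s j (e j.1 (p j)))) Lcs
      rw [hstep]
      exact hv
    · show applySeq e s (toppleAt e s j (w + single s j (e j.1 (p j)))) Lcs = _
      rw [hstep, heq, eq3]

end Wave

section Pump
variable {e : V → V → ℕ} {s : V} {p : {i : V // i ≠ s} → V}

lemma multiWave {u : Conf s} {j : {i : V // i ≠ s}} (hwp : WaveProp e s p u j) :
    ∀ n : ℕ, ∃ L, ValidSeq e s (u + single s j (n * e j.1 (p j))) L ∧
      applySeq e s (u + single s j (n * e j.1 (p j))) L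
        = u + fun k => if k.1 = p j then n * e j.1 (p j) else 0 := by
  intro n
  induction n with
  | zero =>
    refine ⟨[], trivial, ?_⟩
    show u + _ = _
    funext k
    simp only [Pi.add_apply, single, zero_mul]
    by_cases hkj : k = j <;> simp [hkj]
  | succ n ihn =>
    obtain ⟨Lih, hLihv, hLihe⟩ := ihn
    obtain ⟨Lc, hLc⟩ := hwp
    obtain ⟨hLcv, hLce⟩ := hLc u (fun _ _ => rfl)
    have eq1 : u + single s j ((n + 1) * e j.1 (p j))
        = (u + single s j (e j.1 (p j))) + single s j (n * e j.1 (p j)) := by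
      funext k
      simp only [Pi.add_apply, single]
      by_cases hkj : k = j
      · simp only [if_pos hkj]; ring
      · simp only [if_neg hkj]
    obtain ⟨hv1, he1⟩ := validSeq_add hLcv (single s j (n * e j.1 (p j)))
    have eq2 : (u + parentDelta e s p j) + single s j (n * e j.1 (p j))
        = (u + single s j (n * e j.1 (p j))) + parentDelta e s p j := by
      funext k
      simp only [Pi.add_apply]
      ring
    obtain ⟨hv2, he2⟩ := validSeq_add hLihv (parentDelta e s p j)
    refine ⟨Lc ++ Lih, ?_, ?_⟩
    · rw [validSeq_append, eq1]
      exact ⟨hv1, by rw [he1, hLce, eq2]; exact hv2⟩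
    · rw [eq1, applySeq_append, he1, hLce, eq2, he2, hLihe]
      funext k
      simp only [Pi.add_apply, parentDelta]
      by_cases hkp : k.1 = p j
      · simp only [if_pos hkp]; ring
      · simp only [if_neg hkp]

/-- the product of edge multiplicities along the path from `j` to the sink. -/
noncomputable def pathProd (e : V → V → ℕ) (s : V) (p : {i : V // i ≠ s} → V)
    (hp : IsParent e s p) (j : {i : V // i ≠ s}) : ℕ :=
  e j.1 (p j) * (if h : p j = s then 1 else pathProd e s p hp ⟨p j, h⟩)
termination_by (graph e).dist j.1 s
decreasing_by
  have := (hp j).2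
  omega

lemma pathProd_pos (hsym : ∀ i j : V, e i j = e j i) (hp : IsParent e s p)
    (j : {i : V // i ≠ s}) : 0 < pathProd e s p hp j := by
  suffices H : ∀ n (j : {i : V // i ≠ s}), (graph e).dist j.1 s ≤ n →
      0 < pathProd e s p hp j by
    exact H _ j le_rfl
  intro n
  induction n with
  | zero =>
    intro j hj
    have := (hp j).2
    omega
  | succ n ihn =>
    intro j hj
    rw [pathProd]
    apply Nat.mul_pos (e_parent_pos hsym hp j)
    split
    · norm_num
    · refine ihn _ ?_
      have := (hp j).2
      simp only []
      omega

lemma clearOne (hsym : ∀ i j : V, e i j = e j i) (htree : (graph e).IsTree)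
    (hp : IsParent e s p) {u : Conf s} (hu : ∀ i, deg e i.1 ≤ u i + e i.1 (p i)) :
    ∀ (j : {i : V // i ≠ s}) (m : ℕ), ∃ L,
      ValidSeq e s (u + single s j (m * pathProd e s p hp j)) L ∧
      applySeq e s (u + single s j (m * pathProd e s p hp j)) L = u := by
  suffices H : ∀ n (j : {i : V // i ≠ s}), (graph e).dist j.1 s ≤ n → ∀ m : ℕ, ∃ L,
      ValidSeq e s (u + single s j (m * pathProd e s p hp j)) L ∧
      applySeq e s (u + single s j (m * pathProd e s p hp j)) L = u by
    exact fun j m => H _ j le_rfl m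
  intro n
  induction n with
  | zero =>
    intro j hj
    have := (hp j).2
    omega
  | succ n ihn =>
    intro j hj m
    by_cases hpjs : p j = s
    · obtain ⟨L, hv, heq⟩ := multiWave (wave hsym htree hp hu j) m
      have hamt : m * pathProd e s p hp j = m * e j.1 (p j) := by
        rw [pathProd, dif_pos hpjs, mul_one]
      have hfin : (u + fun k => if k.1 = p j then m * e j.1 (p j) else 0) = u := by
        funext k
        have : ¬ (k.1 = p j) := fun h => k.2 (h.trans hpjs)
        simp [this]
      rw [hamt]
      exact ⟨L, hv, by rw [heq, hfin]⟩
    · obtain ⟨L1, hv1, he1⟩ := multiWave (wave hsym htree hp hu j)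
        (m * pathProd e s p hp ⟨p j, hpjs⟩)
      have hamt : m * pathProd e s p hp j
          = m * pathProd e s p hp ⟨p j, hpjs⟩ * e j.1 (p j) := by
        rw [pathProd, dif_neg hpjs]
        ring
      have hfin : (u + fun k => if k.1 = p j
            then m * pathProd e s p hp ⟨p j, hpjs⟩ * e j.1 (p j) else 0)
          = u + single s ⟨p j, hpjs⟩ ((m * e j.1 (p j)) * pathProd e s p hp ⟨p j, hpjs⟩) := by
        funext k
        simp only [Pi.add_apply, single]
        have hiff : (k = (⟨p j, hpjs⟩ : {i : V // i ≠ s})) ↔ (k.1 = p j) := by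
          constructor
          · intro h; rw [h]
          · intro h; exact Subtype.ext h
        by_cases hkp : k.1 = p j
        · simp only [if_pos hkp, if_pos (hiff.2 hkp)]; ring
        · simp only [if_neg hkp, if_neg (fun h => hkp (hiff.1 h))]
      obtain ⟨L2, hv2, he2⟩ := ihn ⟨p j, hpjs⟩ (by have := (hp j).2; simp only []; omega)
        (m * e j.1 (p j))
      refine ⟨L1 ++ L2, ?_, ?_⟩
      · rw [validSeq_append, hamt]
        exact ⟨hv1, by rw [he1, hfin]; exact hv2⟩
      · rw [hamt, applySeq_append, he1, hfin, he2]

lemma clearAll (hsym : ∀ i j : V, e i j = e j i) (htree : (graph e).IsTree)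
    (hp : IsParent e s p) {u : Conf s} (hu : ∀ i, deg e i.1 ≤ u i + e i.1 (p i)) :
    ∀ (T : Finset {i : V // i ≠ s}) (m : {i : V // i ≠ s} → ℕ), (∀ j ∉ T, m j = 0) →
      ∃ L, ValidSeq e s (u + fun j => m j * pathProd e s p hp j) L ∧
        applySeq e s (u + fun j => m j * pathProd e s p hp j) L = u := by
  intro T
  induction T using Finset.induction_on with
  | empty =>
    intro m hm
    have : (u + fun j => m j * pathProd e s p hp j) = u := by
      funext k
      simp [hm k (Finset.notMem_empty k)]
    exact ⟨[], trivial, by rw [this]; rfl⟩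
  | insert a T' ha ih =>
    intro m hm
    set m' : {i : V // i ≠ s} → ℕ := fun j => if j = a then 0 else m j with hm'
    have hm'z : ∀ j ∉ T', m' j = 0 := by
      intro j hj
      by_cases hja : j = a
      · simp [hm', hja]
      · simp only [hm', if_neg hja]
        exact hm j (fun h => (Finset.mem_insert.1 h).elim hja hj)
    have eq1 : (u + fun j => m j * pathProd e s p hp j)
        = (u + single s a (m a * pathProd e s p hp a)) + fun j => m' j * pathProd e s p hp j := by
      funext k
      simp only [Pi.add_apply, single, hm']
      by_cases hka : k = a
      · subst hka
        simp only [eq_self_iff_true, if_true, zero_mul]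
        omega
      · simp only [if_neg hka]
        omega
    obtain ⟨L1, hv1, he1⟩ := clearOne hsym htree hp hu a (m a)
    obtain ⟨hv1', he1'⟩ := validSeq_add hv1 (fun j => m' j * pathProd e s p hp j)
    obtain ⟨L2, hv2, he2⟩ := ih m' hm'z
    refine ⟨L1 ++ L2, ?_, ?_⟩
    · rw [validSeq_append, eq1]
      exact ⟨hv1', by rw [he1', he1]; exact hv2⟩
    · rw [eq1, applySeq_append, he1', he1, he2]

lemma recurrent_of_bounds (hsym : ∀ i j : V, e i j = e j i) (htree : (graph e).IsTree)
    (hp : IsParent e s p) {σ : Conf s → Conf s} (hσ : IsStabilization e s σ) {u : Conf s}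
    (hstab : Stable e s u) (hu : ∀ i, deg e i.1 ≤ u i + e i.1 (p i)) :
    Recurrent e s σ u := by
  refine ⟨hstab, fun v => ?_⟩
  set w : Conf s := fun j => u j + v j * pathProd e s p hp j - v j with hw
  have hvw : v + w = u + fun j => v j * pathProd e s p hp j := by
    funext j
    have h1 : 0 < pathProd e s p hp j := pathProd_pos hsym hp j
    have h2 : v j ≤ v j * pathProd e s p hp j := Nat.le_mul_of_pos_right _ h1
    simp only [Pi.add_apply, hw]
    omega
  obtain ⟨L, hv, he⟩ := clearAll hsym htree hp hu Finset.univ v (fun j hj => absurd (Finset.mem_univ j) hj)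
  refine ⟨w, ?_⟩
  rw [hvw]
  have hs2 : Stable e s (applySeq e s (u + fun j => v j * pathProd e s p hp j) L) := by
    rw [he]; exact hstab
  rw [sigma_eq hσ hv hs2]
  exact he

end Pump

section Final
variable {e : V → V → ℕ} {s : V} {p : {i : V // i ≠ s} → V}

lemma mem_strictDescendants {j i : {i : V // i ≠ s}} :
    i ∈ strictDescendants e s j ↔ i ≠ j ∧ succeq e s i.1 j.1 := by
  simp [strictDescendants]

lemma not_mem_sd_self (j : {i : V // i ≠ s}) : j ∉ strictDescendants e s j := by
  simp [strictDescendants]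

lemma desc_eq_insert (j : {i : V // i ≠ s}) :
    descendants e s j = insert j (strictDescendants e s j) := by
  ext i
  rw [mem_descendants, Finset.mem_insert, mem_strictDescendants]
  constructor
  · intro h
    by_cases hij : i = j
    · exact Or.inl hij
    · exact Or.inr ⟨hij, h⟩
  · rintro (h | ⟨_, h⟩)
    · subst h; exact succeq_refl _
    · exact h

lemma card_sd_lt (htree : (graph e).IsTree) {i j : {i : V // i ≠ s}}
    (hi : i ∈ strictDescendants e s j) :
    (strictDescendants e s i).card < (strictDescendants e s j).card := by
  obtain ⟨hij, hsq⟩ := mem_strictDescendants.1 hi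
  apply Finset.card_lt_card
  constructor
  · intro k hk
    obtain ⟨hki, hks⟩ := mem_strictDescendants.1 hk
    refine mem_strictDescendants.2 ⟨?_, succeq_trans htree hks hsq⟩
    intro hkj
    subst hkj
    exact hij (Subtype.ext (succeq_antisymm htree hsq hks))
  · intro hsub
    exact not_mem_sd_self i (hsub hi)

lemma epj_le_deg (j : {i : V // i ≠ s}) : e j.1 (p j) ≤ deg e j.1 :=
  Finset.single_le_sum (f := fun k => e j.1 k) (fun _ _ => Nat.zero_le _) (Finset.mem_univ (p j))

lemma window_eq {m a b dg : ℕ} (hm : 0 < m) (ha1 : dg ≤ a + m) (ha2 : a < dg)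
    (hb1 : dg ≤ b + m) (hb2 : b < dg)
    (hcast : (a : ZMod m) = (b : ZMod m)) : a = b := by
  haveI : NeZero m := ⟨by omega⟩
  rcases le_total a b with hle | hle
  · have h0 : ((b - a : ℕ) : ZMod m) = 0 := by
      rw [Nat.cast_sub hle, hcast, sub_self]
    have hdvd := (ZMod.natCast_eq_zero_iff _ _).1 h0
    rcases Nat.eq_zero_or_pos (b - a) with h | h
    · omega
    · have := Nat.le_of_dvd h hdvd
      omega
  · have h0 : ((a - b : ℕ) : ZMod m) = 0 := by
      rw [Nat.cast_sub hle, hcast, sub_self]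
    have hdvd := (ZMod.natCast_eq_zero_iff _ _).1 h0
    rcases Nat.eq_zero_or_pos (a - b) with h | h
    · omega
    · have := Nat.le_of_dvd h hdvd
      omega

lemma phi_inj (hsym : ∀ i j : V, e i j = e j i) (htree : (graph e).IsTree)
    (hp : IsParent e s p) {σ : Conf s → Conf s} (hσ : IsStabilization e s σ) {u v : Conf s}
    (hu : Recurrent e s σ u) (hv : Recurrent e s σ v)
    (hphi : phi e s p u = phi e s p v) : u = v := by
  have key : ∀ n (j : {i : V // i ≠ s}), (strictDescendants e s j).card = n → u j = v j := by
    intro n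
    induction n using Nat.strong_induction_on with
    | _ n ih =>
      intro j hcard
      have hIH : ∀ i ∈ strictDescendants e s j, u i = v i := by
        intro i hi
        exact ih _ (hcard ▸ card_sd_lt htree hi) i rfl
      have hj := congrFun hphi j
      unfold phi at hj
      rw [desc_eq_insert, Finset.sum_insert (not_mem_sd_self j),
        Finset.sum_insert (not_mem_sd_self j)] at hj
      have hsums : ∑ i ∈ strictDescendants e s j, ((u i : ℕ) : ZMod (e j.1 (p j)))
          = ∑ i ∈ strictDescendants e s j, ((v i : ℕ) : ZMod (e j.1 (p j))) :=
        Finset.sum_congr rfl (fun i hi => by rw [hIH i hi])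
      rw [hsums] at hj
      have hcast : ((u j : ℕ) : ZMod (e j.1 (p j))) = ((v j : ℕ) : ZMod (e j.1 (p j))) :=
        add_right_cancel hj
      exact window_eq (e_parent_pos hsym hp j)
        (recurrent_lower hsym htree hp hσ hu j) (hu.1 j)
        (recurrent_lower hsym htree hp hσ hv j) (hv.1 j) hcast
  funext j
  exact key _ j rfl

/-- inverse construction for surjectivity. -/
noncomputable def buildU (e : V → V → ℕ) (s : V) (p : {i : V // i ≠ s} → V)
    (t : ∀ j : {i : V // i ≠ s}, ZMod (e j.1 (p j)))
    (hlt : ∀ i j : {i : V // i ≠ s}, i ∈ strictDescendants e s j →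
      (strictDescendants e s i).card < (strictDescendants e s j).card)
    (j : {i : V // i ≠ s}) : ℕ :=
  (deg e j.1 - e j.1 (p j)) +
    (t j - ((deg e j.1 - e j.1 (p j) : ℕ) : ZMod (e j.1 (p j))) -
      ∑ i ∈ (strictDescendants e s j).attach,
        ((buildU e s p t hlt i.1 : ℕ) : ZMod (e j.1 (p j)))).val
termination_by (strictDescendants e s j).card
decreasing_by exact hlt _ _ i.2

lemma phi_surj (hsym : ∀ i j : V, e i j = e j i) (htree : (graph e).IsTree)
    (hp : IsParent e s p) {σ : Conf s → Conf s} (hσ : IsStabilization e s σ)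
    (t : ∀ j : {i : V // i ≠ s}, ZMod (e j.1 (p j))) :
    ∃ u : Conf s, Recurrent e s σ u ∧ phi e s p u = t := by
  have hlt : ∀ i j : {i : V // i ≠ s}, i ∈ strictDescendants e s j →
      (strictDescendants e s i).card < (strictDescendants e s j).card :=
    fun i j hi => card_sd_lt htree hi
  set u : Conf s := buildU e s p t hlt with hudef
  have hval : ∀ j, u j = (deg e j.1 - e j.1 (p j)) +
      (t j - ((deg e j.1 - e j.1 (p j) : ℕ) : ZMod (e j.1 (p j))) -
        ∑ i ∈ (strictDescendants e s j).attach,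
          ((u i.1 : ℕ) : ZMod (e j.1 (p j)))).val := by
    intro j
    rw [hudef]
    rw [buildU]
  have hstab : Stable e s u := by
    intro j
    haveI : NeZero (e j.1 (p j)) := ⟨by have := e_parent_pos hsym hp j; omega⟩
    have h1 := ZMod.val_lt (t j - ((deg e j.1 - e j.1 (p j) : ℕ) : ZMod (e j.1 (p j))) -
        ∑ i ∈ (strictDescendants e s j).attach, ((u i.1 : ℕ) : ZMod (e j.1 (p j))))
    have h2 := epj_le_deg (e := e) (p := p) j
    have h3 := e_parent_pos hsym hp j
    rw [hval j]
    omega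
  have hlow : ∀ j, deg e j.1 ≤ u j + e j.1 (p j) := by
    intro j
    have h2 := epj_le_deg (e := e) (p := p) j
    rw [hval j]
    omega
  refine ⟨u, recurrent_of_bounds hsym htree hp hσ hstab hlow, ?_⟩
  funext j
  haveI : NeZero (e j.1 (p j)) := ⟨by have := e_parent_pos hsym hp j; omega⟩
  unfold phi
  rw [desc_eq_insert, Finset.sum_insert (not_mem_sd_self j)]
  have hattach : ∑ i ∈ (strictDescendants e s j).attach, ((u i.1 : ℕ) : ZMod (e j.1 (p j)))
      = ∑ i ∈ strictDescendants e s j, ((u i : ℕ) : ZMod (e j.1 (p j))) :=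
    Finset.sum_attach _ (fun y => ((u y : ℕ) : ZMod (e j.1 (p j))))
  have hcastval : ((u j : ℕ) : ZMod (e j.1 (p j)))
      = ((deg e j.1 - e j.1 (p j) : ℕ) : ZMod (e j.1 (p j))) +
        (t j - ((deg e j.1 - e j.1 (p j) : ℕ) : ZMod (e j.1 (p j))) -
          ∑ i ∈ strictDescendants e s j, ((u i : ℕ) : ZMod (e j.1 (p j)))) := by
    rw [hval j, Nat.cast_add, ← hattach]
    congr 1
    exact ZMod.natCast_rightInverse _
  rw [hcastval]
  ring

end Final

theorem stmt_5 (e : V → V → ℕ) (s : V) (hsym : ∀ i j : V, e i j = e j i)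
    (htree : (graph e).IsTree)
    (p : {i : V // i ≠ s} → V) (hp : IsParent e s p)
    (σ : Conf s → Conf s) (hσ : IsStabilization e s σ) :
    Set.BijOn (phi e s p) {u | Recurrent e s σ u} Set.univ ∧
    (∀ u v : Conf s, Recurrent e s σ u → Recurrent e s σ v →
      phi e s p (σ (u + v)) = phi e s p u + phi e s p v) := by
  constructor
  · refine ⟨fun u _ => Set.mem_univ _, ?_, ?_⟩
    · intro u hu v hv hphi
      exact phi_inj hsym htree hp hσ hu hv hphi
    · intro t _
      obtain ⟨u, hrec, hphi⟩ := phi_surj hsym htree hp hσ t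
      exact ⟨u, hrec, hphi⟩
  · intro u v hu hv
    rw [phi_sigma hsym htree hp hσ, phi_add]

end SandpilePaper
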